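/- The serial dictatorship mechanism for roommate matching is strategy-proof: no agent can strictly increase its utility (value of assigned roommate plus assigned room) by misreporting its happiness function over agents or valuation over rooms. -/

import Mathlib

variable {A R : Type*} [DecidableEq A] [DecidableEq R]

/-- Serial dictatorship: the first still-unmatched agent picks its most preferred remaining
agent and most preferred remaining room (ties broken by list position, a fixed
deterministic rule); the triple is removed and the process repeats. -/
noncomputable def sdList (h : A → A → ℝ) (v : A → R → ℝ) :
    List A → List R → List (A × A × R)
  | [], _ => []
  | a :: rest, rooms =>
    match rest.argmax (h a), rooms.argmax (v a) with
    | some m, some r => (a, m, r) :: sdList h v (rest.erase m) (rooms.erase r)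
    | _, _ => []
  termination_by l _ => l.length
  decreasing_by
    simp only [List.length_cons]
    exact Nat.lt_succ_of_le (List.Sublist.length_le List.erase_sublist)

/-- The (true) utility of agent `i` in the list of triples output by serial dictatorship:
its happiness for its roommate plus its value for its room. -/
noncomputable def utilIn (h : A → A → ℝ) (v : A → R → ℝ) (L : List (A × A × R)) (i : A) : ℝ :=
  match L.find? (fun t => t.1 == i || t.2.1 == i) with
  | some (x, y, r) => (if x = i then h i y else h i x) + v i r
  | none => 0

lemma utilIn_nil (h : A → A → ℝ) (v : A → R → ℝ) (i : A) : utilIn h v [] i = 0 := rfl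

lemma utilIn_cons_ne (h : A → A → ℝ) (v : A → R → ℝ) {x y : A} (r : R) (L : List (A × A × R))
    {i : A} (hx : x ≠ i) (hy : y ≠ i) :
    utilIn h v ((x, y, r) :: L) i = utilIn h v L i := by
  unfold utilIn
  rw [List.find?_cons_of_neg]
  simp [hx, hy]

lemma utilIn_cons_head (h : A → A → ℝ) (v : A → R → ℝ) (y : A) (r : R) (L : List (A × A × R))
    (i : A) :
    utilIn h v ((i, y, r) :: L) i = h i y + v i r := by
  unfold utilIn
  rw [List.find?_cons_of_pos]
  · simp
  · simp

lemma utilIn_cons_snd (h : A → A → ℝ) (v : A → R → ℝ) {x : A} (r : R) (L : List (A × A × R))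
    {i : A} (hx : x ≠ i) :
    utilIn h v ((x, i, r) :: L) i = h i x + v i r := by
  unfold utilIn
  rw [List.find?_cons_of_pos]
  · simp [hx]
  · simp

lemma sd_key (h : A → A → ℝ) (v : A → R → ℝ) (i : A) (h' : A → ℝ) (v' : R → ℝ) :
    ∀ (n : ℕ) (agents : List A) (rooms : List R), agents.length ≤ n → agents.Nodup →
    utilIn h v (sdList (Function.update h i h') (Function.update v i v') agents rooms) i
      ≤ utilIn h v (sdList h v agents rooms) i := by
  intro n
  induction n with
  | zero =>
    intro agents rooms hlen _
    rw [List.length_eq_zero_iff.mp (Nat.le_zero.mp hlen)]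
    rw [sdList, sdList]
  | succ n ih =>
    intro agents rooms hlen hnd
    match agents with
    | [] => rw [sdList, sdList]
    | a :: rest =>
      by_cases hai : a = i
      · subst hai
        rw [sdList, sdList]
        simp only [Function.update_self]
        rcases hm : rest.argmax (h a) with _ | m
        · rw [List.argmax_eq_none] at hm
          subst hm
          simp [utilIn_nil]
        rcases hr : rooms.argmax (v a) with _ | r
        · rw [List.argmax_eq_none] at hr
          subst hr
          simp [utilIn_nil]
        rcases hm' : rest.argmax h' with _ | m'
        · rw [List.argmax_eq_none] at hm'
          subst hm'
          simp at hm
        rcases hr' : rooms.argmax v' with _ | r'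
        · rw [List.argmax_eq_none] at hr'
          subst hr'
          simp at hr
        simp only
        rw [utilIn_cons_head, utilIn_cons_head]
        have h1 : h a m' ≤ h a m := by
          have := List.not_lt_of_mem_argmax (List.argmax_mem hm') hm
          linarith [lt_or_ge (h a m) (h a m')]
        have h2 : v a r' ≤ v a r := by
          have := List.not_lt_of_mem_argmax (List.argmax_mem hr') hr
          linarith [lt_or_ge (v a r) (v a r')]
        linarith
      · rw [sdList, sdList]
        rw [Function.update_of_ne hai, Function.update_of_ne hai]
        rcases hm : rest.argmax (h a) with _ | m
        · rfl
        rcases hr : rooms.argmax (v a) with _ | r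
        · rfl
        simp only
        by_cases hmi : m = i
        · subst hmi
          rw [utilIn_cons_snd h v _ _ hai, utilIn_cons_snd h v _ _ hai]
        · rw [utilIn_cons_ne h v _ _ hai hmi, utilIn_cons_ne h v _ _ hai hmi]
          exact ih (rest.erase m) (rooms.erase r)
            (le_trans (List.Sublist.length_le List.erase_sublist)
              (Nat.le_of_succ_le_succ hlen))
            (hnd.of_cons.erase m)

/-- Serial dictatorship is strategy-proof: no agent can strictly increase its
true utility by misreporting its happiness function over agents or its valuation over
rooms, when all other agents report truthfully. -/
theorem sd_strategyproof (agents : List A) (rooms : List R)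
    (hagents : agents.Nodup) (hrooms : rooms.Nodup)
    (hlen : agents.length = 2 * rooms.length)
    (h : A → A → ℝ) (v : A → R → ℝ) (i : A) (h' : A → ℝ) (v' : R → ℝ) :
    utilIn h v (sdList (Function.update h i h') (Function.update v i v') agents rooms) i
      ≤ utilIn h v (sdList h v agents rooms) i :=
  sd_key h v i h' v' agents.length agents rooms le_rfl hagents
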